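/- Let F = FreeGroup Bool be the free group on two generators x = FreeGroup.of false and y = FreeGroup.of true. The homomorphism F →* F determined by x ↦ ⁅x,⁅x,y⁆⁆ and y ↦ ⁅y,⁅x,y⁆⁆ is injective; that is, the elements ⁅x,⁅x,y⁆⁆ and ⁅y,⁅x,y⁆⁆ freely generate a free subgroup of rank 2 (which is contained in [F,[F,F]]). -/

import Mathlib

open FreeGroup List

open scoped commutatorElement

variable {α : Type*} [DecidableEq α]

lemma reduced_tail {x : α × Bool} {L : List (α × Bool)}
    (h : reduce (x :: L) = x :: L) : reduce L = L := by
  rw [reduce.cons] at h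
  rcases r : reduce L with _ | ⟨hd, tl⟩
  · rw [r] at h
    simp only at h
    injection h with h1 h2
  · rw [r] at h
    simp only at h
    split_ifs at h with hc
    · exfalso
      have hlen : (reduce L).length ≤ L.length := reduce.red.length_le
      rw [r, h] at hlen
      simp at hlen
    · injection h with h1 h2

lemma reduced_no_cancel {x y : α × Bool} {L : List (α × Bool)}
    (h : reduce (x :: y :: L) = x :: y :: L) : ¬(x.1 = y.1 ∧ x.2 = !y.2) := by
  intro hc
  have ht : reduce (y :: L) = y :: L := reduced_tail h
  rw [reduce.cons, ht] at h
  simp only [if_pos hc] at h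
  have := congrArg List.length h
  simp at this
  omega

lemma reduced_cons {x : α × Bool} {L : List (α × Bool)} (hL : reduce L = L)
    (h : ∀ y t, L = y :: t → ¬(x.1 = y.1 ∧ x.2 = !y.2)) : reduce (x :: L) = x :: L := by
  rw [reduce.cons, hL]
  rcases L with _ | ⟨hd, tl⟩
  · rfl
  · simp only
    rw [if_neg (h hd tl rfl)]

lemma reduce_append {P L : List (α × Bool)} (hL : reduce L = L)
    (hP : reduce (P ++ L.take 1) = P ++ L.take 1) : reduce (P ++ L) = P ++ L := by
  rcases L with _ | ⟨l, ls⟩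
  · simpa using hP
  · replace hP : reduce (P ++ [l]) = P ++ [l] := by simpa using hP
    induction P with
    | nil => exact hL
    | cons p ps ih =>
      have hPt : reduce (ps ++ [l]) = ps ++ [l] := reduced_tail hP
      have ihred : reduce (ps ++ l :: ls) = ps ++ l :: ls := ih hPt
      rw [List.cons_append]
      apply reduced_cons ihred
      intro y t hy
      rcases ps with _ | ⟨q, qs⟩
      · simp only [List.nil_append] at hy hP
        have := reduced_no_cancel (L := []) hP
        rwa [(by injection hy : l = y)] at this
      · simp only [List.cons_append] at hy hP
        have := reduced_no_cancel hP
        rwa [(by injection hy : q = y)] at this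

lemma reduce_append_cons {P : List (α × Bool)} {c : α × Bool} {L : List (α × Bool)}
    (hL : reduce (c :: L) = c :: L) (hP : reduce (P ++ [c]) = P ++ [c]) :
    reduce (P ++ c :: L) = P ++ c :: L :=
  reduce_append hL (by simpa using hP)

lemma reduce_congr {P Q : List (α × Bool)} (L : List (α × Bool))
    (h : FreeGroup.mk P = FreeGroup.mk Q) :
    reduce (P ++ L) = reduce (Q ++ L) :=
  reduce.sound (by rw [← FreeGroup.mul_mk, ← FreeGroup.mul_mk, h])

namespace DCH

abbrev Pr := Bool × Bool

def lA : List Pr := [(false,true),(true,true),(false,false),(true,false),(false,false),(true,true),(false,true),(true,false)]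
def lAi : List Pr := [(true,true),(false,false),(true,false),(false,true),(true,true),(false,true),(true,false),(false,false)]
def lB : List Pr := [(false,false),(true,true),(false,true),(true,true),(false,false),(true,false),(false,true),(true,false)]
def lBi : List Pr := [(true,true),(false,false),(true,true),(false,true),(true,false),(false,false),(true,false),(false,true)]

def pX0 : List Pr := [(false,true),(true,true)]
def pY0 : List Pr := [(true,true),(false,false),(true,false)]
def pX1 : List Pr := [(false,false),(true,true)]
def pY1 : List Pr := [(true,true),(false,false),(true,true)]

lemma ping_a (L : List Pr) (hL : reduce L = L) (hpre : ¬ pY0 <+: L) :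
    pX0 <+: reduce (lA ++ L) := by
  rcases L with _ | ⟨⟨b1, s1⟩, L1⟩
  · rw [reduce_append hL (by decide)]; decide
  · have hL1 : reduce L1 = L1 := reduced_tail hL
    cases b1 <;> cases s1
    · rw [reduce_append_cons hL (by decide)]; exact ⟨_, rfl⟩
    · rw [reduce_append_cons hL (by decide)]; exact ⟨_, rfl⟩
    · rw [reduce_append_cons hL (by decide)]; exact ⟨_, rfl⟩
    · -- first letter (true, true) = y : cancels
      rw [show lA ++ ((true,true) :: L1) = (lA ++ [(true,true)]) ++ L1 by simp]
      rw [reduce_congr L1 (reduce.exact (L₂ := [(false,true),(true,true),(false,false),(true,false),(false,false),(true,true),(false,true)]) (by decide))]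
      rcases L1 with _ | ⟨⟨b2, s2⟩, L2⟩
      · decide
      · have hL2 : reduce L2 = L2 := reduced_tail hL1
        cases b2 <;> cases s2
        · -- (false,false) = x⁻¹ : cancels
          rw [show [(false,true),(true,true),(false,false),(true,false),(false,false),(true,true),(false,true)] ++ ((false,false) :: L2) = ([(false,true),(true,true),(false,false),(true,false),(false,false),(true,true),(false,true)] ++ [(false,false)]) ++ L2 by simp]
          rw [reduce_congr L2 (reduce.exact (L₂ := [(false,true),(true,true),(false,false),(true,false),(false,false),(true,true)]) (by decide))]
          rcases L2 with _ | ⟨⟨b3, s3⟩, L3⟩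
          · decide
          · cases b3 <;> cases s3
            · rw [reduce_append_cons hL2 (by decide)]; exact ⟨_, rfl⟩
            · exact absurd (reduced_no_cancel hL1) (by decide)
            · exact absurd ⟨L3, rfl⟩ hpre
            · rw [reduce_append_cons hL2 (by decide)]; exact ⟨_, rfl⟩
        · rw [reduce_append_cons hL1 (by decide)]; exact ⟨_, rfl⟩
        · exact absurd (reduced_no_cancel hL) (by decide)
        · rw [reduce_append_cons hL1 (by decide)]; exact ⟨_, rfl⟩

lemma ping_ai (L : List Pr) (hL : reduce L = L) (hpre : ¬ pX0 <+: L) :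
    pY0 <+: reduce (lAi ++ L) := by
  rcases L with _ | ⟨⟨b1, s1⟩, L1⟩
  · rw [reduce_append hL (by decide)]; decide
  · have hL1 : reduce L1 = L1 := reduced_tail hL
    cases b1 <;> cases s1
    · rw [reduce_append_cons hL (by decide)]; exact ⟨_, rfl⟩
    · -- first letter (false,true) = x : cancels
      rw [show lAi ++ ((false,true) :: L1) = (lAi ++ [(false,true)]) ++ L1 by simp]
      rw [reduce_congr L1 (reduce.exact (L₂ := [(true,true),(false,false),(true,false),(false,true),(true,true),(false,true),(true,false)]) (by decide))]
      rcases L1 with _ | ⟨⟨b2, s2⟩, L2⟩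
      · decide
      · cases b2 <;> cases s2
        · exact absurd (reduced_no_cancel hL) (by decide)
        · rw [reduce_append_cons hL1 (by decide)]; exact ⟨_, rfl⟩
        · rw [reduce_append_cons hL1 (by decide)]; exact ⟨_, rfl⟩
        · exact absurd ⟨L2, rfl⟩ hpre
    · rw [reduce_append_cons hL (by decide)]; exact ⟨_, rfl⟩
    · rw [reduce_append_cons hL (by decide)]; exact ⟨_, rfl⟩

lemma ping_b (L : List Pr) (hL : reduce L = L) (hpre : ¬ pY1 <+: L) :
    pX1 <+: reduce (lB ++ L) := by
  rcases L with _ | ⟨⟨b1, s1⟩, L1⟩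
  · rw [reduce_append hL (by decide)]; decide
  · have hL1 : reduce L1 = L1 := reduced_tail hL
    cases b1 <;> cases s1
    · rw [reduce_append_cons hL (by decide)]; exact ⟨_, rfl⟩
    · rw [reduce_append_cons hL (by decide)]; exact ⟨_, rfl⟩
    · rw [reduce_append_cons hL (by decide)]; exact ⟨_, rfl⟩
    · -- first letter (true,true) = y : cancels
      rw [show lB ++ ((true,true) :: L1) = (lB ++ [(true,true)]) ++ L1 by simp]
      rw [reduce_congr L1 (reduce.exact (L₂ := [(false,false),(true,true),(false,true),(true,true),(false,false),(true,false),(false,true)]) (by decide))]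
      rcases L1 with _ | ⟨⟨b2, s2⟩, L2⟩
      · decide
      · have hL2 : reduce L2 = L2 := reduced_tail hL1
        cases b2 <;> cases s2
        · -- (false,false) = x⁻¹ : cancels
          rw [show [(false,false),(true,true),(false,true),(true,true),(false,false),(true,false),(false,true)] ++ ((false,false) :: L2) = ([(false,false),(true,true),(false,true),(true,true),(false,false),(true,false),(false,true)] ++ [(false,false)]) ++ L2 by simp]
          rw [reduce_congr L2 (reduce.exact (L₂ := [(false,false),(true,true),(false,true),(true,true),(false,false),(true,false)]) (by decide))]
          rcases L2 with _ | ⟨⟨b3, s3⟩, L3⟩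
          · decide
          · cases b3 <;> cases s3
            · rw [reduce_append_cons hL2 (by decide)]; exact ⟨_, rfl⟩
            · exact absurd (reduced_no_cancel hL1) (by decide)
            · rw [reduce_append_cons hL2 (by decide)]; exact ⟨_, rfl⟩
            · exact absurd ⟨L3, rfl⟩ hpre
        · rw [reduce_append_cons hL1 (by decide)]; exact ⟨_, rfl⟩
        · exact absurd (reduced_no_cancel hL) (by decide)
        · rw [reduce_append_cons hL1 (by decide)]; exact ⟨_, rfl⟩

lemma ping_bi (L : List Pr) (hL : reduce L = L) (hpre : ¬ pX1 <+: L) :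
    pY1 <+: reduce (lBi ++ L) := by
  rcases L with _ | ⟨⟨b1, s1⟩, L1⟩
  · rw [reduce_append hL (by decide)]; decide
  · have hL1 : reduce L1 = L1 := reduced_tail hL
    cases b1 <;> cases s1
    · -- first letter (false,false) = x⁻¹ : cancels
      rw [show lBi ++ ((false,false) :: L1) = (lBi ++ [(false,false)]) ++ L1 by simp]
      rw [reduce_congr L1 (reduce.exact (L₂ := [(true,true),(false,false),(true,true),(false,true),(true,false),(false,false),(true,false)]) (by decide))]
      rcases L1 with _ | ⟨⟨b2, s2⟩, L2⟩
      · decide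
      · cases b2 <;> cases s2
        · rw [reduce_append_cons hL1 (by decide)]; exact ⟨_, rfl⟩
        · exact absurd (reduced_no_cancel hL) (by decide)
        · rw [reduce_append_cons hL1 (by decide)]; exact ⟨_, rfl⟩
        · exact absurd ⟨L2, rfl⟩ hpre
    · rw [reduce_append_cons hL (by decide)]; exact ⟨_, rfl⟩
    · rw [reduce_append_cons hL (by decide)]; exact ⟨_, rfl⟩
    · rw [reduce_append_cons hL (by decide)]; exact ⟨_, rfl⟩


end DCH
open FreeGroup List DCH

namespace DCH

def gens : Bool → FreeGroup Bool := fun t => if t then FreeGroup.mk lB else FreeGroup.mk lA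

def SX : Bool → Set (FreeGroup Bool) := fun t => {w | (if t then pX1 else pX0) <+: w.toWord}
def SY : Bool → Set (FreeGroup Bool) := fun t => {w | (if t then pY1 else pY0) <+: w.toWord}

lemma disj_of_prefix {P Q : List Pr} (h : ¬ (P <+: Q ∨ Q <+: P)) :
    Disjoint {w : FreeGroup Bool | P <+: w.toWord} {w : FreeGroup Bool | Q <+: w.toWord} := by
  rw [Set.disjoint_left]
  intro w hP hQ
  rcases le_total P.length Q.length with hl | hl
  · exact h (Or.inl (List.prefix_of_prefix_length_le hP hQ hl))
  · exact h (Or.inr (List.prefix_of_prefix_length_le hQ hP hl))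

lemma lift_gens_injective : Function.Injective (FreeGroup.lift gens) := by
  apply FreeGroup.injective_lift_of_ping_pong gens SX SY
  · intro i
    cases i
    · refine ⟨FreeGroup.mk pX0, ?_⟩
      show pX0 <+: (FreeGroup.mk pX0).toWord
      rw [FreeGroup.toWord_mk]
      decide
    · refine ⟨FreeGroup.mk pX1, ?_⟩
      show pX1 <+: (FreeGroup.mk pX1).toWord
      rw [FreeGroup.toWord_mk]
      decide
  · intro i j hij
    cases i <;> cases j <;> first
      | exact absurd rfl hij
      | · simp only [Function.onFun, SX, if_pos, if_neg, Bool.false_ne_true]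
          exact disj_of_prefix (by decide)
  · intro i j hij
    cases i <;> cases j <;> first
      | exact absurd rfl hij
      | · simp only [Function.onFun, SY, if_pos, if_neg, Bool.false_ne_true]
          exact disj_of_prefix (by decide)
  · intro i j
    cases i <;> cases j <;>
      · simp only [SX, SY, if_pos, if_neg, Bool.false_ne_true]
        exact disj_of_prefix (by decide)
  · intro i z hz
    rcases Set.mem_smul_set.mp hz with ⟨w, hw, rfl⟩
    have hw' : w ∈ (SY i)ᶜ := hw
    rw [smul_eq_mul]
    cases i
    · show pX0 <+: ((FreeGroup.mk lA) * w).toWord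
      rw [← FreeGroup.mk_toWord (x := w), FreeGroup.mul_mk, FreeGroup.toWord_mk]
      exact ping_a w.toWord (FreeGroup.reduce_toWord w)
        (by simpa [SY, Set.mem_compl_iff] using hw')
    · show pX1 <+: ((FreeGroup.mk lB) * w).toWord
      rw [← FreeGroup.mk_toWord (x := w), FreeGroup.mul_mk, FreeGroup.toWord_mk]
      exact ping_b w.toWord (FreeGroup.reduce_toWord w)
        (by simpa [SY, Set.mem_compl_iff] using hw')
  · intro i z hz
    rcases Set.mem_smul_set.mp hz with ⟨w, hw, rfl⟩
    have hw' : w ∈ (SX i)ᶜ := hw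
    rw [Pi.inv_apply, smul_eq_mul]
    cases i
    · show pY0 <+: ((FreeGroup.mk lA)⁻¹ * w).toWord
      rw [FreeGroup.inv_mk, show invRev lA = lAi from by decide,
        ← FreeGroup.mk_toWord (x := w), FreeGroup.mul_mk, FreeGroup.toWord_mk]
      exact ping_ai w.toWord (FreeGroup.reduce_toWord w)
        (by simpa [SX, Set.mem_compl_iff] using hw')
    · show pY1 <+: ((FreeGroup.mk lB)⁻¹ * w).toWord
      rw [FreeGroup.inv_mk, show invRev lB = lBi from by decide,
        ← FreeGroup.mk_toWord (x := w), FreeGroup.mul_mk, FreeGroup.toWord_mk]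
      exact ping_bi w.toWord (FreeGroup.reduce_toWord w)
        (by simpa [SX, Set.mem_compl_iff] using hw')

lemma mk_lA_eq :
    FreeGroup.mk lA = (FreeGroup.of false)⁻¹ *
      ⁅FreeGroup.of false, ⁅FreeGroup.of false, FreeGroup.of true⁆⁆ * FreeGroup.of false := by
  have hx : FreeGroup.of (false : Bool) = FreeGroup.mk [(false, true)] := rfl
  have hy : FreeGroup.of (true : Bool) = FreeGroup.mk [(true, true)] := rfl
  have h1 : FreeGroup.mk lA =
      FreeGroup.of false * FreeGroup.of true * (FreeGroup.of false)⁻¹ * (FreeGroup.of true)⁻¹ *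
      (FreeGroup.of false)⁻¹ * FreeGroup.of true * FreeGroup.of false * (FreeGroup.of true)⁻¹ := by
    rw [hx, hy]
    simp only [FreeGroup.inv_mk, FreeGroup.mul_mk]
    rfl
  rw [h1, commutatorElement_def, commutatorElement_def]
  group

lemma mk_lB_eq :
    FreeGroup.mk lB = (FreeGroup.of false)⁻¹ *
      ⁅FreeGroup.of true, ⁅FreeGroup.of false, FreeGroup.of true⁆⁆ * FreeGroup.of false := by
  have hx : FreeGroup.of (false : Bool) = FreeGroup.mk [(false, true)] := rfl
  have hy : FreeGroup.of (true : Bool) = FreeGroup.mk [(true, true)] := rfl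
  have h1 : FreeGroup.mk lB =
      (FreeGroup.of false)⁻¹ * FreeGroup.of true * FreeGroup.of false * FreeGroup.of true *
      (FreeGroup.of false)⁻¹ * (FreeGroup.of true)⁻¹ * FreeGroup.of false *
      (FreeGroup.of true)⁻¹ := by
    rw [hx, hy]
    simp only [FreeGroup.inv_mk, FreeGroup.mul_mk]
    rfl
  rw [h1, commutatorElement_def, commutatorElement_def]
  group

end DCH

/-- The endomorphism of `FreeGroup Bool` (free on `x = FreeGroup.of false` and
`y = FreeGroup.of true`) determined by `x ↦ ⁅x,⁅x,y⁆⁆` and `y ↦ ⁅y,⁅x,y⁆⁆`. -/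
def doubleCommutatorHom : FreeGroup Bool →* FreeGroup Bool :=
  FreeGroup.lift fun t =>
    if t then ⁅FreeGroup.of true, ⁅FreeGroup.of false, FreeGroup.of true⁆⁆
    else ⁅FreeGroup.of false, ⁅FreeGroup.of false, FreeGroup.of true⁆⁆

/-- The elements `⁅x,⁅x,y⁆⁆` and `⁅y,⁅x,y⁆⁆` freely generate a free subgroup of
rank 2 of the free group on `x, y`. -/
theorem doubleCommutatorHom_injective : Function.Injective doubleCommutatorHom := by
  have key : doubleCommutatorHom =
      ((MulAut.conj (FreeGroup.of false)).toMonoidHom).comp (FreeGroup.lift DCH.gens) := by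
    apply FreeGroup.ext_hom
    intro a
    cases a <;>
      simp only [doubleCommutatorHom, MonoidHom.comp_apply, FreeGroup.lift_apply_of, DCH.gens,
        if_pos, if_neg Bool.false_ne_true, MulEquiv.coe_toMonoidHom, MulAut.conj_apply,
        DCH.mk_lA_eq, DCH.mk_lB_eq] <;> group
  rw [key, MonoidHom.coe_comp]
  exact ((MulAut.conj (FreeGroup.of false)).injective).comp DCH.lift_gens_injective
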